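/- If f : Mⁿ → ℝ^m is isoparametric (flat normal bundle and constant eigenvalues of shape operators in parallel normal directions) then f is proper, i.e., the number s(x) of distinct principal normals is constant on M. -/

import Mathlib

open RealInnerProductSpace

section Helpers

variable {V : Type*} [NormedAddCommGroup V] [InnerProductSpace ℝ V]

/-- Avoid finitely many hyperplanes. -/
lemma avoid_hyperplanes (D : Finset V) (hD : ∀ d ∈ D, d ≠ 0) :
    ∃ w : V, ∀ d ∈ D, ⟪d, w⟫ ≠ 0 := by
  classical
  induction D using Finset.induction_on with
  | empty => exact ⟨0, fun d hd => absurd hd (by simp)⟩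
  | @insert d s hds ih =>
    obtain ⟨w, hw⟩ := ih (fun e he => hD e (Finset.mem_insert_of_mem he))
    have hd0 : d ≠ 0 := hD d (Finset.mem_insert_self d s)
    obtain ⟨t, ht⟩ := Infinite.exists_notMem_finset
      ((insert d s).image fun e => -⟪e, w⟫ / ⟪e, d⟫)
    refine ⟨w + t • d, fun e he => ?_⟩
    have hIP : ⟪e, w + t • d⟫ = ⟪e, w⟫ + t * ⟪e, d⟫ := by
      rw [inner_add_right, real_inner_smul_right]
    rw [hIP]
    by_cases h0 : ⟪e, d⟫ = 0
    · rw [h0, mul_zero, add_zero]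
      rcases Finset.mem_insert.mp he with rfl | he'
      · exact absurd ((inner_self_eq_zero (𝕜 := ℝ)).mp h0) hd0
      · exact hw e he'
    · intro hcon
      apply ht
      refine Finset.mem_image.mpr ⟨e, he, ?_⟩
      field_simp
      linarith

/-- A symmetric operator has an eigenvector inside any nonzero invariant subspace. -/
lemma sym_eigen_in_invariant [FiniteDimensional ℝ V]
    (T : V →ₗ[ℝ] V) (hT : T.IsSymmetric) (W : Submodule ℝ V) (hW : W ≠ ⊥)
    (hinv : ∀ v ∈ W, T v ∈ W) :
    ∃ v ∈ W, v ≠ 0 ∧ ∃ c : ℝ, T v = c • v := by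
  have hinv' : ∀ v ∈ W, T v ∈ W := hinv
  set T' : W →ₗ[ℝ] W := T.restrict hinv' with hT'def
  have hT' : T'.IsSymmetric := by
    intro u v
    have h1 : (T' u : V) = T u := rfl
    have h2 : (T' v : V) = T v := rfl
    rw [Submodule.coe_inner, Submodule.coe_inner, h1, h2]
    exact hT u v
  haveI : Nontrivial W := Submodule.nontrivial_iff_ne_bot.mpr hW
  have hpos : 0 < Module.finrank ℝ W := Module.finrank_pos
  set i : Fin (Module.finrank ℝ W) := ⟨0, hpos⟩
  set b := hT'.eigenvectorBasis rfl
  set v : W := b i with hv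
  have hvne : v ≠ 0 := b.orthonormal.ne_zero i
  have heig : T' v = (hT'.eigenvalues rfl i : ℝ) • v := by
    exact_mod_cast hT'.apply_eigenvectorBasis rfl i
  refine ⟨(v : V), v.2, ?_, hT'.eigenvalues rfl i, ?_⟩
  · simpa using hvne
  · have := congrArg (Subtype.val) heig
    have h1' : (T' v : V) = T v := rfl
    rw [← h1']
    simpa using this

/-- Commuting symmetric operators have a common eigenvector in any nonzero
jointly invariant subspace. -/
lemma common_eigenvector [FiniteDimensional ℝ V] :
    ∀ (k : ℕ) (S : Fin k → V →ₗ[ℝ] V), (∀ i, (S i).IsSymmetric) →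
    (∀ i j v, S i (S j v) = S j (S i v)) →
    ∀ (W : Submodule ℝ V), W ≠ ⊥ → (∀ i, ∀ v ∈ W, S i v ∈ W) →
    ∃ v, v ∈ W ∧ v ≠ 0 ∧ ∀ i, ∃ c : ℝ, S i v = c • v := by
  intro k
  induction k with
  | zero =>
    intro S _ _ W hW _
    obtain ⟨v, hvW, hv⟩ := (Submodule.ne_bot_iff W).mp hW
    exact ⟨v, hvW, hv, fun i => i.elim0⟩
  | succ k IH =>
    intro S hsym hcomm W hW hinv
    obtain ⟨v0, hv0W, hv0, c, hc⟩ := sym_eigen_in_invariant (S 0) (hsym 0) W hW (hinv 0)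
    set W' := W ⊓ LinearMap.ker (S 0 - c • LinearMap.id) with hW'def
    have hmemW' : ∀ v, v ∈ W' ↔ v ∈ W ∧ S 0 v = c • v := by
      intro v
      simp [hW'def, Submodule.mem_inf, LinearMap.mem_ker, LinearMap.sub_apply,
        LinearMap.smul_apply, LinearMap.id_apply, sub_eq_zero]
    have hW' : W' ≠ ⊥ := by
      rw [Submodule.ne_bot_iff]
      exact ⟨v0, (hmemW' v0).mpr ⟨hv0W, hc⟩, hv0⟩
    have hinv' : ∀ i : Fin k, ∀ v ∈ W', S i.succ v ∈ W' := by
      intro i v hv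
      obtain ⟨hvW, hvk⟩ := (hmemW' v).mp hv
      refine (hmemW' _).mpr ⟨hinv i.succ v hvW, ?_⟩
      rw [hcomm 0 i.succ v, hvk, map_smul]
    obtain ⟨v, hvW', hv, he⟩ := IH (fun i => S i.succ) (fun i => hsym i.succ)
      (fun i j w => hcomm i.succ j.succ w) W' hW' hinv'
    obtain ⟨hvW, hvk⟩ := (hmemW' v).mp hvW'
    refine ⟨v, hvW, hv, fun i => ?_⟩
    exact Fin.cases ⟨c, hvk⟩ (fun j => he j) i

/-- The set of principal normals of a symmetric bilinear form. -/
def PN {T N : Type*} [NormedAddCommGroup T] [InnerProductSpace ℝ T]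
    [NormedAddCommGroup N] [InnerProductSpace ℝ N]
    (α : T →ₗ[ℝ] T →ₗ[ℝ] N) : Set N :=
  {η | ∃ X : T, X ≠ 0 ∧ ∀ Y : T, α X Y = ⟪X, Y⟫ • η}

/-- The set of principal normals is finite. -/
lemma pn_finite {T N : Type*} [NormedAddCommGroup T] [InnerProductSpace ℝ T]
    [FiniteDimensional ℝ T] [NormedAddCommGroup N] [InnerProductSpace ℝ N]
    (α : T →ₗ[ℝ] T →ₗ[ℝ] N) (hs : ∀ X Y, α X Y = α Y X) : (PN α).Finite := by
  classical
  rw [← Set.finite_coe_iff]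
  choose X hX0 hXα using fun η : PN α => η.2
  have hortho : Pairwise fun η₁ η₂ : PN α => ⟪X η₁, X η₂⟫ = 0 := by
    intro η₁ η₂ hne
    have h1 : α (X η₁) (X η₂) = ⟪X η₁, X η₂⟫ • (η₁ : N) := hXα η₁ (X η₂)
    have h2 : α (X η₁) (X η₂) = ⟪X η₁, X η₂⟫ • (η₂ : N) := by
      rw [hs, hXα η₂ (X η₁), real_inner_comm]
    by_contra hc
    exact hne (Subtype.ext (smul_right_injective N hc (h1.symm.trans h2)))
  have hli : LinearIndependent ℝ X :=
    linearIndependent_of_ne_zero_of_inner_eq_zero hX0 hortho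
  exact hli.finite

end Helpers

/-- Main inequality: the number of principal normals at `x` is at most that at `y`. -/
lemma pn_ncard_le {M : Type*}
    (Tang : M → Type*) [∀ x, NormedAddCommGroup (Tang x)]
    [∀ x, InnerProductSpace ℝ (Tang x)] [∀ x, FiniteDimensional ℝ (Tang x)]
    (Nor : M → Type*) [∀ x, NormedAddCommGroup (Nor x)]
    [∀ x, InnerProductSpace ℝ (Nor x)] [∀ x, FiniteDimensional ℝ (Nor x)]
    (α : ∀ x, Tang x →ₗ[ℝ] Tang x →ₗ[ℝ] Nor x)
    (hsymm : ∀ x X Y, α x X Y = α x Y X)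
    (A : ∀ x, Nor x → (Tang x →ₗ[ℝ] Tang x))
    (hA : ∀ x (ξ : Nor x) (X Y : Tang x), ⟪A x ξ X, Y⟫ = ⟪α x X Y, ξ⟫)
    (hcomm : ∀ x (ξ ζ : Nor x), (A x ξ) ∘ₗ (A x ζ) = (A x ζ) ∘ₗ (A x ξ))
    (Parallel : (∀ x, Nor x) → Prop)
    (hext : ∀ x (v : Nor x), ∃ ξ, Parallel ξ ∧ ξ x = v)
    (hpar : ∀ ξ ζ, Parallel ξ → Parallel ζ → ∀ x y, ⟪ξ x, ζ x⟫ = ⟪ξ y, ζ y⟫)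
    (hiso : ∀ ξ, Parallel ξ → ∀ x y,
      {c : ℝ | Module.End.HasEigenvalue (A x (ξ x)) c} =
      {c : ℝ | Module.End.HasEigenvalue (A y (ξ y)) c})
    (x y : M) : (PN (α x)).ncard ≤ (PN (α y)).ncard := by
  classical
  -- symmetry of the shape operators
  have hAsym : ∀ z (ξ : Nor z), (A z ξ).IsSymmetric := by
    intro z ξ X Y
    rw [hA, hsymm z X Y, ← hA z ξ Y X]
    exact real_inner_comm _ _
  -- pointwise commutation
  have hcm' : ∀ z (u v : Nor z) (t : Tang z), A z u (A z v t) = A z v (A z u t) := by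
    intro z u v t
    have := DFunLike.congr_fun (hcomm z u v) t
    simpa [LinearMap.comp_apply] using this
  -- A is additive / homogeneous in the normal direction
  have hAadd : ∀ z (ζ₁ ζ₂ : Nor z) (X : Tang z),
      A z (ζ₁ + ζ₂) X = A z ζ₁ X + A z ζ₂ X := by
    intro z ζ₁ ζ₂ X
    apply ext_inner_right ℝ
    intro Y
    rw [inner_add_left, hA, hA, hA, inner_add_right]
  have hAsmul : ∀ z (r : ℝ) (ζ : Nor z) (X : Tang z),
      A z (r • ζ) X = r • A z ζ X := by
    intro z r ζ X
    apply ext_inner_right ℝ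
    intro Y
    rw [real_inner_smul_left, hA, hA, real_inner_smul_right]
  -- Principal normal condition in terms of eigen-equations
  have heigen_of : ∀ z (η : Nor z) (X : Tang z),
      (∀ Y, α z X Y = ⟪X, Y⟫ • η) → ∀ v : Nor z, A z v X = ⟪η, v⟫ • X := by
    intro z η X hXα v
    apply ext_inner_right ℝ
    intro Y
    rw [hA, hXα, real_inner_smul_left, real_inner_smul_left]
    ring
  have hof_eigen : ∀ z (η : Nor z) (X : Tang z),
      (∀ v : Nor z, A z v X = ⟪η, v⟫ • X) → ∀ Y, α z X Y = ⟪X, Y⟫ • η := by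
    intro z η X hE Y
    apply ext_inner_right ℝ
    intro v
    have h := hA z v X Y
    rw [hE v] at h
    rw [← h, real_inner_smul_left, real_inner_smul_left]
    ring
  -- parallel fields agreeing at one point agree everywhere
  have hwd : ∀ (ξ ζ : ∀ z, Nor z), Parallel ξ → Parallel ζ →
      ∀ a b : M, ξ a = ζ a → ξ b = ζ b := by
    intro ξ ζ hξ hζ a b hab
    apply ext_inner_right ℝ
    intro w
    obtain ⟨θ, hθ, hθb⟩ := hext b w
    rw [← hθb, hpar ξ θ hξ hθ b a, hpar ζ θ hζ hθ b a, hab]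
  -- the key transfer of principal normals along parallel fields
  have hmap : ∀ (a b : M) (ξ : ∀ z, Nor z), Parallel ξ →
      ξ a ∈ PN (α a) → ξ b ∈ PN (α b) := by
    intro a b ξ hξ hmem
    obtain ⟨X, hX0, hXα⟩ := hmem
    -- choose a generic direction w at b
    set D : Finset (Nor b) :=
      (((pn_finite (α b) (hsymm b)).toFinset.image fun e => e - ξ b).erase 0) with hD
    have hDne : ∀ d ∈ D, d ≠ 0 := fun d hd => Finset.ne_of_mem_erase hd
    obtain ⟨w, hw⟩ := avoid_hyperplanes D hDne
    have hgen : ∀ e ∈ PN (α b), e ≠ ξ b → ⟪e - ξ b, w⟫ ≠ 0 := by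
      intro e he hne
      apply hw
      refine Finset.mem_erase.mpr ⟨sub_ne_zero.mpr hne, ?_⟩
      exact Finset.mem_image.mpr
        ⟨e, (pn_finite (α b) (hsymm b)).mem_toFinset.mpr he, rfl⟩
    obtain ⟨θ, hθ, hθb⟩ := hext b w
    set c : ℝ := ⟪ξ b, w⟫ with hc
    -- c is an eigenvalue of the shape operator in the direction θ at a
    have heiga : A a (θ a) X = c • X := by
      rw [heigen_of a (ξ a) X hXα (θ a)]
      congr 1
      rw [hc, ← hθb]
      exact hpar ξ θ hξ hθ a b
    have hEa : Module.End.HasEigenvalue (A a (θ a)) c :=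
      Module.End.hasEigenvalue_of_hasEigenvector
        ⟨Module.End.mem_eigenspace_iff.mpr heiga, hX0⟩
    have hEb : Module.End.HasEigenvalue (A b (θ b)) c :=
      (Set.ext_iff.mp (hiso θ hθ a b) c).mp hEa
    rw [hθb] at hEb
    -- the eigenspace W at b, invariant under all shape operators
    set W := Module.End.eigenspace (A b w) c with hWdef
    have hWne : W ≠ ⊥ := hEb
    have hWinv : ∀ (ζ : Nor b), ∀ v ∈ W, A b ζ v ∈ W := by
      intro ζ v hv
      rw [hWdef, Module.End.mem_eigenspace_iff] at hv ⊢
      rw [hcm' b w ζ v, hv, map_smul]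
    -- common eigenvector in W
    set bb := Module.finBasis ℝ (Nor b) with hbb
    obtain ⟨Y, hYW, hY0, hYe⟩ := common_eigenvector (Module.finrank ℝ (Nor b))
      (fun i => A b (bb i)) (fun i => hAsym b (bb i))
      (fun i j v => hcm' b (bb i) (bb j) v) W hWne (fun i => hWinv (bb i))
    set r : ℝ := ⟪Y, Y⟫ with hr
    have hrne : r ≠ 0 := fun h => hY0 ((inner_self_eq_zero (𝕜 := ℝ)).mp h)
    set η₀ : Nor b := r⁻¹ • α b Y Y with hη₀
    -- eigen relations take the inner-product form
    have hform : ∀ ζ : Nor b, (∃ c' : ℝ, A b ζ Y = c' • Y) → A b ζ Y = ⟪η₀, ζ⟫ • Y := by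
      rintro ζ ⟨c', hc'⟩
      have h1 : ⟪A b ζ Y, Y⟫ = c' * r := by rw [hc', real_inner_smul_left, hr]
      have h2 : ⟪A b ζ Y, Y⟫ = ⟪α b Y Y, ζ⟫ := hA b ζ Y Y
      have h3 : ⟪η₀, ζ⟫ = r⁻¹ * ⟪α b Y Y, ζ⟫ := by rw [hη₀, real_inner_smul_left]
      have hcη : c' = ⟪η₀, ζ⟫ := by
        rw [h3, ← h2, h1]
        field_simp
      rw [hc', hcη]
    -- a linear map vanishing on a basis vanishes
    set L : Nor b →ₗ[ℝ] Tang b :=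
      { toFun := fun ζ => A b ζ Y - ⟪η₀, ζ⟫ • Y
        map_add' := by
          intro ζ₁ ζ₂
          show A b (ζ₁ + ζ₂) Y - ⟪η₀, ζ₁ + ζ₂⟫ • Y =
            (A b ζ₁ Y - ⟪η₀, ζ₁⟫ • Y) + (A b ζ₂ Y - ⟪η₀, ζ₂⟫ • Y)
          rw [hAadd, inner_add_right, add_smul]
          abel
        map_smul' := by
          intro m ζ
          show A b (m • ζ) Y - ⟪η₀, m • ζ⟫ • Y = m • (A b ζ Y - ⟪η₀, ζ⟫ • Y)
          rw [hAsmul, real_inner_smul_right, mul_smul, ← smul_sub] } with hL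
    have hL0 : L = 0 := by
      apply bb.ext
      intro i
      have hi := hform (bb i) (hYe i)
      show A b (bb i) Y - ⟪η₀, bb i⟫ • Y = 0
      rw [hi, sub_self]
    have hall : ∀ ζ : Nor b, A b ζ Y = ⟪η₀, ζ⟫ • Y := by
      intro ζ
      have := DFunLike.congr_fun hL0 ζ
      have h2 : A b ζ Y - ⟪η₀, ζ⟫ • Y = 0 := this
      rwa [sub_eq_zero] at h2
    have hη₀S : η₀ ∈ PN (α b) := ⟨Y, hY0, hof_eigen b η₀ Y hall⟩
    have hYw : A b w Y = c • Y := Module.End.mem_eigenspace_iff.mp hYW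
    have hinner : ⟪η₀, w⟫ = c := by
      apply smul_left_injective ℝ hY0
      show ⟪η₀, w⟫ • Y = c • Y
      rw [← hall w, hYw]
    by_cases hfinal : ξ b = η₀
    · rw [hfinal]; exact hη₀S
    · exfalso
      apply hgen η₀ hη₀S (fun h => hfinal h.symm)
      rw [inner_sub_left, hinner, hc, sub_self]
  -- conclude with an injection
  choose G hGpar hGval using hext x
  set F : Nor x → Nor y := fun v => G v y with hF
  have hFmem : ∀ v ∈ PN (α x), F v ∈ PN (α y) := by
    intro v hv
    refine hmap x y (G v) (hGpar v) ?_
    rw [hGval v]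
    exact hv
  have hFinj : Function.Injective F := by
    intro v₁ v₂ h12
    have h3 := hwd _ _ (hGpar v₁) (hGpar v₂) y x h12
    rw [hGval v₁, hGval v₂] at h3
    exact h3
  calc (PN (α x)).ncard = (F '' PN (α x)).ncard :=
        (Set.ncard_image_of_injOn hFinj.injOn).symm
    _ ≤ (PN (α y)).ncard := Set.ncard_le_ncard
        (by rintro _ ⟨v, hv, rfl⟩; exact hFmem v hv) (pn_finite (α y) (hsymm y))

/-- If f : Mⁿ → ℝᵐ is isoparametric (flat normal bundle and constant
eigenvalues of the shape operators A_ξ in parallel normal directions ξ), then f is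
proper: the number s(x) of distinct principal normals — the vectors η ∈ N_fM(x) for
which the space E(x,η) = {X : α(X,Y) = ⟨X,Y⟩η ∀Y} is nonzero — is constant on M.
(The tangent and normal spaces, second fundamental form, shape operators and the
predicate of being a parallel normal field are given as data; flatness of the normal
bundle means the shape operators commute and every normal vector extends to a parallel
normal field, and parallel normal fields have constant inner products.) -/
theorem stmt19 {M : Type*}
    (Tang : M → Type*) [∀ x, NormedAddCommGroup (Tang x)]
    [∀ x, InnerProductSpace ℝ (Tang x)] [∀ x, FiniteDimensional ℝ (Tang x)]
    (Nor : M → Type*) [∀ x, NormedAddCommGroup (Nor x)]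
    [∀ x, InnerProductSpace ℝ (Nor x)] [∀ x, FiniteDimensional ℝ (Nor x)]
    -- the second fundamental form at each point
    (α : ∀ x, Tang x →ₗ[ℝ] Tang x →ₗ[ℝ] Nor x)
    (hsymm : ∀ x X Y, α x X Y = α x Y X)
    -- the shape operators: ⟨A_ξ X, Y⟩ = ⟨α(X,Y), ξ⟩
    (A : ∀ x, Nor x → (Tang x →ₗ[ℝ] Tang x))
    (hA : ∀ x (ξ : Nor x) (X Y : Tang x), ⟪A x ξ X, Y⟫ = ⟪α x X Y, ξ⟫)
    -- flat normal bundle: the shape operators commute ...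
    (hcomm : ∀ x (ξ ζ : Nor x), (A x ξ) ∘ₗ (A x ζ) = (A x ζ) ∘ₗ (A x ξ))
    -- ... and, parallel normal fields being available, every normal vector extends
    -- to a parallel normal field, and parallel fields have constant inner products
    (Parallel : (∀ x, Nor x) → Prop)
    (hext : ∀ x (v : Nor x), ∃ ξ, Parallel ξ ∧ ξ x = v)
    (hpar : ∀ ξ ζ, Parallel ξ → Parallel ζ → ∀ x y, ⟪ξ x, ζ x⟫ = ⟪ξ y, ζ y⟫)
    -- isoparametric: the shape operator in any parallel normal direction has
    -- constant eigenvalues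
    (hiso : ∀ ξ, Parallel ξ → ∀ x y,
      {c : ℝ | Module.End.HasEigenvalue (A x (ξ x)) c} =
      {c : ℝ | Module.End.HasEigenvalue (A y (ξ y)) c}) :
    -- conclusion: f is proper, i.e. the number of principal normals is constant
    ∀ x y : M,
      {η : Nor x | ∃ X : Tang x, X ≠ 0 ∧ ∀ Y : Tang x, α x X Y = ⟪X, Y⟫ • η}.ncard =
      {η : Nor y | ∃ X : Tang y, X ≠ 0 ∧ ∀ Y : Tang y, α y X Y = ⟪X, Y⟫ • η}.ncard := by
  intro x y
  exact le_antisymm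
    (pn_ncard_le Tang Nor α hsymm A hA hcomm Parallel hext hpar hiso x y)
    (pn_ncard_le Tang Nor α hsymm A hA hcomm Parallel hext hpar hiso y x)
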